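/- Let H, γ ∈ (0,1) and c > 0, and define for 0 ≤ s ≤ t < ∞ the function V_Y²(s,t) = ((1−γ) t^{2H} + (γ²−γ) s^{2H} + γ (t−s)^{2H}) / (1 + ct − cγs)². Then V_Y attains its unique global maximum over the set B = {(s,t) : 0 ≤ s ≤ t < ∞} at the point (s̃₀, t̃₀) with s̃₀ = 0 and t̃₀ = H/(c(1−H)); that is, V_Y(s,t) < V_Y(0, t̃₀) for all (s,t) ∈ B with (s,t) ≠ (0, t̃₀), and moreover V_Y(0, t̃₀) = H^H (1−H)^{1−H} / c^H. -/

import Mathlib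

/-- The variance function `V_Y²(s,t)` of the Gaussian field
`Y(s,t) = (X_H(t) − γ X_H(s))/(1 + ct − cγs)`. -/
noncomputable def VY2 (H γ c s t : ℝ) : ℝ :=
  ((1 - γ) * t ^ (2*H) + (γ^2 - γ) * s ^ (2*H) + γ * (t - s) ^ (2*H))
    / (1 + c * t - c * γ * s) ^ 2

/-- The standard deviation function `V_Y(s,t)`. -/
noncomputable def VY (H γ c s t : ℝ) : ℝ := Real.sqrt (VY2 H γ c s t)

open Real Set

private lemma cont_rpow {p : ℝ} (hp : 0 ≤ p) : Continuous fun x : ℝ => x ^ p := by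
  rw [continuous_iff_continuousAt]
  exact fun x => Real.continuousAt_rpow_const x p (Or.inr hp)

private lemma chi_neg {a x : ℝ} (ha1 : 1 < a) (ha2 : a < 2) (hx0 : 0 < x) (hx1 : x < 1) :
    1 - x ^ a - (1 - x) ^ a - a * x * (1 - x) ^ (a - 1) < 0 := by
  have ha0 : (0:ℝ) < a := by linarith
  set χ : ℝ → ℝ := fun y => 1 - y ^ a - (1 - y) ^ a - a * y * (1 - y) ^ (a - 1) with hχ
  set ρ : ℝ → ℝ := fun y => (1 - y) ^ (2 - a) - (a - 1) * y ^ (2 - a) with hρ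
  -- ρ is strictly antitone on [0,1]
  have hρanti : StrictAntiOn ρ (Icc 0 1) := by
    intro y hy z hz hyz
    have h1 : (1 - z) ^ (2 - a) < (1 - y) ^ (2 - a) :=
      Real.rpow_lt_rpow (by linarith [hz.2]) (by linarith) (by linarith)
    have h2 : (a - 1) * y ^ (2 - a) ≤ (a - 1) * z ^ (2 - a) :=
      mul_le_mul_of_nonneg_left (Real.rpow_le_rpow hy.1 hyz.le (by linarith)) (by linarith)
    simp only [hρ]; linarith
  have hρcont : ContinuousOn ρ (Icc 0 1) :=
    (((cont_rpow (by linarith : (0:ℝ) ≤ 2 - a)).comp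
      (continuous_const.sub continuous_id)).sub
      (continuous_const.mul (cont_rpow (by linarith : (0:ℝ) ≤ 2 - a)))).continuousOn
  have hρ0 : ρ 0 = 1 := by
    simp [hρ, Real.zero_rpow (by linarith : (2:ℝ) - a ≠ 0), Real.one_rpow]
  have hρ1 : ρ 1 = -(a - 1) := by
    simp [hρ, Real.zero_rpow (by linarith : (2:ℝ) - a ≠ 0)]
  -- find the zero c0 of ρ
  obtain ⟨c0, hc0mem, hc0⟩ : ∃ c0 ∈ Icc (0:ℝ) 1, ρ c0 = 0 := by
    have := intermediate_value_Icc' (by norm_num : (0:ℝ) ≤ 1) hρcont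
      (by rw [hρ0, hρ1]; constructor <;> linarith : (0:ℝ) ∈ Icc (ρ 1) (ρ 0))
    obtain ⟨c0, h1, h2⟩ := this
    exact ⟨c0, h1, h2⟩
  -- derivative of χ
  have hχderiv : ∀ y ∈ Ioo (0:ℝ) 1, HasDerivAt χ
      (a * ((a - 1) * y * (1 - y) ^ (a - 2) - y ^ (a - 1))) y := by
    intro y hy
    have hy0 : (0:ℝ) < y := hy.1
    have hy1 : (0:ℝ) < 1 - y := by linarith [hy.2]
    have d1 : HasDerivAt (fun y : ℝ => y ^ a) (a * y ^ (a - 1)) y :=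
      Real.hasDerivAt_rpow_const (Or.inl hy0.ne')
    have dlin : HasDerivAt (fun y : ℝ => 1 - y) (-1) y := (hasDerivAt_id y).const_sub 1
    have d2 : HasDerivAt (fun y : ℝ => (1 - y) ^ a) (-1 * a * (1 - y) ^ (a - 1)) y :=
      dlin.rpow_const (Or.inl hy1.ne')
    have d3' : HasDerivAt (fun y : ℝ => (1 - y) ^ (a - 1))
        (-1 * (a - 1) * (1 - y) ^ (a - 1 - 1)) y := dlin.rpow_const (Or.inl hy1.ne')
    have d3 : HasDerivAt (fun y : ℝ => a * y * (1 - y) ^ (a - 1))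
        (a * (1 - y) ^ (a - 1) + a * y * (-1 * (a - 1) * (1 - y) ^ (a - 1 - 1))) y := by
      have := ((hasDerivAt_id y).const_mul a).fun_mul d3'
      simpa [mul_comm, mul_assoc] using this
    have := (((hasDerivAt_const y (1:ℝ)).fun_sub d1).fun_sub d2).fun_sub d3
    refine this.congr_deriv ?_
    rw [show a - 1 - 1 = a - 2 by ring]
    ring
  have hχcont : Continuous χ := by
    have c1 := cont_rpow ha0.le
    have c2 : Continuous fun y : ℝ => (1 - y) ^ a := c1.comp (continuous_const.sub continuous_id)
    have c3 : Continuous fun y : ℝ => (1 - y) ^ (a - 1) :=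
      (cont_rpow (by linarith : (0:ℝ) ≤ a - 1)).comp (continuous_const.sub continuous_id)
    exact ((continuous_const.sub c1).sub c2).sub ((continuous_const.mul continuous_id).mul c3)
  -- sign of the derivative
  have hkey : ∀ y ∈ Ioo (0:ℝ) 1, (0 < ρ y → (a-1) * y * (1-y)^(a-2) < y^(a-1)) ∧
      (ρ y < 0 → y^(a-1) < (a-1) * y * (1-y)^(a-2)) := by
    intro y hy
    have hy0 : (0:ℝ) < y := hy.1
    have hy1 : (0:ℝ) < 1 - y := by linarith [hy.2]
    have hM : (0:ℝ) < y ^ (a-1) * (1-y) ^ (a-2) := by positivity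
    have e1 : y ^ (2-a) * (y ^ (a-1) * (1-y) ^ (a-2)) = y * (1-y) ^ (a-2) := by
      rw [← mul_assoc, ← Real.rpow_add hy0, show (2-a) + (a-1) = 1 by ring, Real.rpow_one]
    have e2 : (1-y) ^ (2-a) * (y ^ (a-1) * (1-y) ^ (a-2)) = y ^ (a-1) := by
      rw [mul_comm (y ^ (a-1)) _, ← mul_assoc, ← Real.rpow_add hy1,
        show (2-a) + (a-2) = 0 by ring, Real.rpow_zero, one_mul]
    constructor
    · intro hpos
      have h2 : (a-1) * y ^ (2-a) * (y ^ (a-1) * (1-y) ^ (a-2)) <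
          (1-y) ^ (2-a) * (y ^ (a-1) * (1-y) ^ (a-2)) := by
        apply mul_lt_mul_of_pos_right _ hM
        simp only [hρ] at hpos; linarith
      rw [mul_assoc, e1, e2] at h2
      rw [mul_assoc]; exact h2
    · intro hneg
      have h2 : (1-y) ^ (2-a) * (y ^ (a-1) * (1-y) ^ (a-2)) <
          (a-1) * y ^ (2-a) * (y ^ (a-1) * (1-y) ^ (a-2)) := by
        apply mul_lt_mul_of_pos_right _ hM
        simp only [hρ] at hneg; linarith
      rw [mul_assoc, e1, e2] at h2
      rw [mul_assoc]; exact h2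
  have hc01 : c0 ≤ 1 := hc0mem.2
  have hc00 : 0 ≤ c0 := hc0mem.1
  have hc0ne0 : c0 ≠ 0 := by intro h; rw [h, hρ0] at hc0; norm_num at hc0
  have hc0ne1 : c0 ≠ 1 := by intro h; rw [h, hρ1] at hc0; simp at hc0; linarith
  -- χ strictly decreasing on [0,c0]
  have hanti : StrictAntiOn χ (Icc 0 c0) := by
    apply strictAntiOn_of_deriv_neg (convex_Icc 0 c0) hχcont.continuousOn
    intro y hy
    rw [interior_Icc] at hy
    have hy' : y ∈ Ioo (0:ℝ) 1 := ⟨hy.1, lt_of_lt_of_le hy.2 hc01⟩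
    have hρy : 0 < ρ y := by
      have := hρanti ⟨hy'.1.le, hy'.2.le⟩ hc0mem hy.2
      rw [hc0] at this; exact this
    rw [(hχderiv y hy').deriv]
    have := (hkey y hy').1 hρy
    nlinarith
  -- χ strictly increasing on [c0,1]
  have hmono : StrictMonoOn χ (Icc c0 1) := by
    apply strictMonoOn_of_deriv_pos (convex_Icc c0 1) hχcont.continuousOn
    intro y hy
    rw [interior_Icc] at hy
    have hy' : y ∈ Ioo (0:ℝ) 1 := ⟨lt_of_le_of_lt hc00 hy.1, hy.2⟩
    have hρy : ρ y < 0 := by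
      have := hρanti hc0mem ⟨hy'.1.le, hy'.2.le⟩ hy.1
      rw [hc0] at this; exact this
    rw [(hχderiv y hy').deriv]
    have := (hkey y hy').2 hρy
    nlinarith
  have hχ0 : χ 0 = 0 := by
    simp [hχ, Real.zero_rpow ha0.ne', Real.one_rpow]
  have hχ1 : χ 1 = 0 := by
    simp [hχ, Real.zero_rpow (by linarith : a - 1 ≠ 0), Real.zero_rpow ha0.ne',
      Real.one_rpow]
  have hgoal : χ x < 0 := by
    rcases le_or_gt x c0 with h | h
    · have := hanti ⟨le_refl 0, hc00⟩ ⟨hx0.le, h⟩ hx0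
      rw [hχ0] at this; exact this
    · have := hmono ⟨h.le, hx1.le⟩ ⟨hc01.trans (le_refl 1), le_refl 1⟩ hx1
      rw [hχ1] at this; exact this
  simpa [hχ] using hgoal

private lemma phi_pos {a x g : ℝ} (ha0 : 0 < a) (ha2 : a < 2) (hx0 : 0 < x) (hx1 : x < 1)
    (hg0 : 0 < g) (hg1 : g < 1) :
    (1 - g) + (g ^ 2 - g) * x ^ a + g * (1 - x) ^ a < (1 - g * x) ^ a := by
  set Φ : ℝ → ℝ := fun t => (1 - t*x)^a - (1 - t) - (t^2 - t)*x^a - t*(1-x)^a with hΦdef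
  set P : ℝ → ℝ := fun t => 1 - (2*t - 1)*x^a - (1-x)^a - a*x*(1 - t*x)^(a-1) with hPdef
  set Q : ℝ → ℝ := fun t => a*(a-1)*x^2*(1 - t*x)^(a-2) - 2*x^a with hQdef
  set U : Set ℝ := {t : ℝ | t*x < 1} with hUdef
  have hUopen : IsOpen U := isOpen_lt (continuous_id.mul continuous_const) continuous_const
  have hmem : ∀ t ∈ Icc (0:ℝ) 1, t ∈ U := by
    intro t ht
    have : t * x ≤ 1 * x := mul_le_mul_of_nonneg_right ht.2 hx0.le
    simp only [hUdef, mem_setOf_eq]; nlinarith [ht.1]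
  have hbase : ∀ t ∈ U, (0:ℝ) < 1 - t*x := fun t ht => by
    simp only [hUdef, mem_setOf_eq] at ht; linarith
  -- derivatives
  have hΦ' : ∀ t ∈ U, HasDerivAt Φ (P t) t := by
    intro t ht
    have hb := hbase t ht
    have dlin : HasDerivAt (fun t : ℝ => 1 - t*x) (-x) t := by
      simpa using ((hasDerivAt_id t).mul_const x).const_sub 1
    have d1 : HasDerivAt (fun t : ℝ => (1 - t*x)^a) (-x * a * (1 - t*x)^(a-1)) t :=
      dlin.rpow_const (Or.inl hb.ne')
    have d2 : HasDerivAt (fun t : ℝ => 1 - t) (-1) t := (hasDerivAt_id t).const_sub 1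
    have d3 : HasDerivAt (fun t : ℝ => (t^2 - t)*x^a) ((2*t - 1)*x^a) t := by
      have := ((hasDerivAt_pow 2 t).fun_sub (hasDerivAt_id t)).mul_const (x^a)
      refine this.congr_deriv ?_
      push_cast; ring
    have d4 : HasDerivAt (fun t : ℝ => t*(1-x)^a) ((1-x)^a) t := by
      simpa using (hasDerivAt_id t).mul_const ((1-x)^a)
    have := ((d1.fun_sub d2).fun_sub d3).fun_sub d4
    refine this.congr_deriv ?_
    simp only [hPdef]; ring
  have hP' : ∀ t ∈ U, HasDerivAt P (Q t) t := by
    intro t ht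
    have hb := hbase t ht
    have dlin : HasDerivAt (fun t : ℝ => 1 - t*x) (-x) t := by
      simpa using ((hasDerivAt_id t).mul_const x).const_sub 1
    have d1 : HasDerivAt (fun t : ℝ => (1 - t*x)^(a-1)) (-x * (a-1) * (1 - t*x)^(a-1-1)) t :=
      dlin.rpow_const (Or.inl hb.ne')
    have d2 : HasDerivAt (fun t : ℝ => (2*t - 1)*x^a) (2*x^a) t := by
      have := (((hasDerivAt_id t).const_mul 2).sub_const 1).mul_const (x^a)
      refine this.congr_deriv ?_
      ring
    have d3 : HasDerivAt (fun t : ℝ => a*x*(1 - t*x)^(a-1))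
        (a*x*(-x * (a-1) * (1 - t*x)^(a-1-1))) t := d1.const_mul (a*x)
    have := (((hasDerivAt_const t (1:ℝ)).fun_sub d2).fun_sub
      (hasDerivAt_const t ((1-x)^a))).fun_sub d3
    refine this.congr_deriv ?_
    simp only [hQdef]
    rw [show a - 1 - 1 = a - 2 by ring]
    ring
  have hQ' : ∀ t ∈ U, HasDerivAt Q (a*(a-1)*x^2*(-x * (a-2) * (1 - t*x)^(a-2-1))) t := by
    intro t ht
    have hb := hbase t ht
    have dlin : HasDerivAt (fun t : ℝ => 1 - t*x) (-x) t := by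
      simpa using ((hasDerivAt_id t).mul_const x).const_sub 1
    have d1 : HasDerivAt (fun t : ℝ => (1 - t*x)^(a-2)) (-x * (a-2) * (1 - t*x)^(a-2-1)) t :=
      dlin.rpow_const (Or.inl hb.ne')
    have := (d1.const_mul (a*(a-1)*x^2)).sub_const (2*x^a)
    rw [hQdef]
    exact this
  have hΦcont : ContinuousOn Φ (Icc 0 1) :=
    fun t ht => ((hΦ' t (hmem t ht)).continuousAt).continuousWithinAt
  have hPcont : ContinuousOn P (Icc 0 1) :=
    fun t ht => ((hP' t (hmem t ht)).continuousAt).continuousWithinAt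
  have hΦ0 : Φ 0 = 0 := by simp [hΦdef, Real.one_rpow]
  have hΦ1 : Φ 1 = 0 := by simp [hΦdef]
  -- P 1 < 0
  have hP1 : P 1 < 0 := by
    have e : P 1 = 1 - x^a - (1-x)^a - a*x*(1-x)^(a-1) := by
      simp only [hPdef]; norm_num
    rw [e]
    rcases lt_trichotomy a 1 with h | h | h
    · have h1 : x ^ (1:ℝ) < x ^ a := Real.rpow_lt_rpow_of_exponent_gt hx0 hx1 h
      have h2 : (1-x) ^ (1:ℝ) < (1-x) ^ a :=
        Real.rpow_lt_rpow_of_exponent_gt (by linarith) (by linarith) h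
      rw [Real.rpow_one] at h1 h2
      have h3 : 0 < a*x*(1-x)^(a-1) := by
        have := Real.rpow_pos_of_pos (show (0:ℝ) < 1 - x by linarith) (a-1)
        positivity
      linarith
    · subst h
      simp [Real.rpow_one, Real.rpow_zero]
      nlinarith
    · exact chi_neg h ha2 hx0 hx1
  -- case split on shape
  have hshape : (∀ t ∈ Ioo (0:ℝ) 1, deriv P t = Q t) := by
    intro t ht
    exact (hP' t (hmem t ⟨ht.1.le, ht.2.le⟩)).deriv
  -- main sign-pattern claim
  have hsign : ∃ b, 0 < b ∧ b ≤ 1 ∧ (∀ t ∈ Ico (0:ℝ) b, 0 < P t) ∧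
      (∀ t ∈ Ioc b 1, P t < 0) := by
    rcases le_or_gt a 1 with hcase | hcase
    · -- P strictly antitone on [0,1]
      have hPanti : StrictAntiOn P (Icc 0 1) := by
        apply strictAntiOn_of_deriv_neg (convex_Icc 0 1) hPcont
        intro t ht
        rw [interior_Icc] at ht
        rw [hshape t ht]
        have hb := hbase t (hmem t ⟨ht.1.le, ht.2.le⟩)
        have h1 : a*(a-1)*x^2*(1 - t*x)^(a-2) ≤ 0 := by
          have h1a : a*(a-1) ≤ 0 := mul_nonpos_of_nonneg_of_nonpos ha0.le (by linarith)
          have h1b : a*(a-1)*x^2 ≤ 0 := mul_nonpos_of_nonpos_of_nonneg h1a (sq_nonneg x)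
          exact mul_nonpos_of_nonpos_of_nonneg h1b (Real.rpow_pos_of_pos hb (a-2)).le
        have h2 : 0 < 2*x^a := by
          have := Real.rpow_pos_of_pos hx0 a; linarith
        simp only [hQdef]; linarith
      have hP0 : 0 < P 0 := by
        by_contra hP0
        push_neg at hP0
        have hΦanti : StrictAntiOn Φ (Icc 0 1) := by
          apply strictAntiOn_of_deriv_neg (convex_Icc 0 1) hΦcont
          intro t ht
          rw [interior_Icc] at ht
          rw [(hΦ' t (hmem t ⟨ht.1.le, ht.2.le⟩)).deriv]
          have := hPanti (left_mem_Icc.2 zero_le_one) ⟨ht.1.le, ht.2.le⟩ ht.1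
          linarith
        have := hΦanti (left_mem_Icc.2 zero_le_one) (right_mem_Icc.2 zero_le_one) zero_lt_one
        rw [hΦ0, hΦ1] at this; exact lt_irrefl 0 this
      obtain ⟨b, hbmem, hb⟩ : ∃ b ∈ Icc (0:ℝ) 1, P b = 0 := by
        have := intermediate_value_Icc' (by norm_num : (0:ℝ) ≤ 1) hPcont
          (⟨hP1.le, hP0.le⟩ : (0:ℝ) ∈ Icc (P 1) (P 0))
        obtain ⟨b, h1, h2⟩ := this
        exact ⟨b, h1, h2⟩
      have hbne0 : b ≠ 0 := fun h => by
        rw [h] at hb; rw [hb] at hP0; exact lt_irrefl 0 hP0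
      refine ⟨b, lt_of_le_of_ne hbmem.1 (Ne.symm hbne0), hbmem.2, ?_, ?_⟩
      · intro t ht
        have := hPanti ⟨ht.1, ht.2.le.trans hbmem.2⟩ hbmem ht.2
        rw [hb] at this; exact this
      · intro t ht
        have := hPanti hbmem ⟨(hbmem.1.trans ht.1.le), ht.2⟩ ht.1
        rw [hb] at this; exact this
    · -- P strictly convex on [0,1]
      have hPconv : StrictConvexOn ℝ (Icc 0 1) P := by
        apply strictConvexOn_of_deriv2_pos (convex_Icc 0 1) hPcont
        intro t ht
        rw [interior_Icc] at ht
        have htU : t ∈ U := hmem t ⟨ht.1.le, ht.2.le⟩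
        have hb := hbase t htU
        have hev : deriv P =ᶠ[nhds t] Q := by
          filter_upwards [hUopen.mem_nhds htU] with y hy
          exact (hP' y hy).deriv
        have h2 : deriv (deriv P) t = deriv Q t := hev.deriv_eq
        have h3 : deriv Q t = a*(a-1)*x^2*(-x * (a-2) * (1 - t*x)^(a-2-1)) :=
          (hQ' t htU).deriv
        show 0 < deriv (deriv P) t
        rw [h2, h3]
        have h5 : 0 < a*(a-1)*x^2 := mul_pos (mul_pos ha0 (by linarith)) (by positivity)
        have h6 : 0 < -x * (a-2) * (1 - t*x)^(a-2-1) := by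
          have h7 : 0 < -x * (a-2) := by nlinarith
          exact mul_pos h7 (Real.rpow_pos_of_pos hb (a-2-1))
        exact mul_pos h5 h6
      have hP0 : 0 < P 0 := by
        by_contra hP0
        push_neg at hP0
        have hPneg : ∀ t ∈ Ioo (0:ℝ) 1, P t < 0 := by
          intro t ht
          have := hPconv.2 (left_mem_Icc.2 zero_le_one) (right_mem_Icc.2 zero_le_one)
            (by norm_num) (by linarith [ht.2] : (0:ℝ) < 1 - t) ht.1 (by ring)
          simp only [smul_eq_mul, mul_zero, mul_one, zero_add] at this
          have h8 : (1-t) * P 0 ≤ 0 :=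
            mul_nonpos_of_nonneg_of_nonpos (by linarith [ht.2]) hP0
          have h9 : t * P 1 < 0 := mul_neg_of_pos_of_neg ht.1 hP1
          linarith
        have hΦanti : StrictAntiOn Φ (Icc 0 1) := by
          apply strictAntiOn_of_deriv_neg (convex_Icc 0 1) hΦcont
          intro t ht
          rw [interior_Icc] at ht
          rw [(hΦ' t (hmem t ⟨ht.1.le, ht.2.le⟩)).deriv]
          exact hPneg t ht
        have := hΦanti (left_mem_Icc.2 zero_le_one) (right_mem_Icc.2 zero_le_one) zero_lt_one
        rw [hΦ0, hΦ1] at this; exact lt_irrefl 0 this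
      obtain ⟨b, hbmem, hb⟩ : ∃ b ∈ Icc (0:ℝ) 1, P b = 0 := by
        have := intermediate_value_Icc' (by norm_num : (0:ℝ) ≤ 1) hPcont
          (⟨hP1.le, hP0.le⟩ : (0:ℝ) ∈ Icc (P 1) (P 0))
        obtain ⟨b, h1, h2⟩ := this
        exact ⟨b, h1, h2⟩
      have hbne0 : b ≠ 0 := fun h => by
        rw [h] at hb; rw [hb] at hP0; exact lt_irrefl 0 hP0
      have hbne1 : b ≠ 1 := fun h => by
        rw [h] at hb; rw [hb] at hP1; exact lt_irrefl 0 hP1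
      have hb1 : b < 1 := lt_of_le_of_ne hbmem.2 hbne1
      have hb0 : 0 < b := lt_of_le_of_ne hbmem.1 (Ne.symm hbne0)
      refine ⟨b, hb0, hbmem.2, ?_, ?_⟩
      · intro t ht
        -- b = μ t + ν·1 with μ = (1-b)/(1-t), ν = (b-t)/(1-t)
        have ht1 : t < 1 := lt_of_lt_of_le ht.2 hbmem.2
        have htne : (0:ℝ) < 1 - t := by linarith
        have hμ : 0 < (1-b)/(1-t) := div_pos (by linarith) htne
        have hν : 0 < (b-t)/(1-t) := by
          apply div_pos _ htne; linarith [ht.2]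
        have hsum : (1-b)/(1-t) + (b-t)/(1-t) = 1 := by field_simp; ring
        have := hPconv.2 ⟨ht.1, ht1.le⟩ (right_mem_Icc.2 zero_le_one)
          (by intro h; rw [h] at ht1; exact lt_irrefl 1 ht1) hμ hν hsum
        simp only [smul_eq_mul, mul_one] at this
        have he : (1-b)/(1-t) * t + (b-t)/(1-t) = b := by field_simp; ring
        rw [he, hb] at this
        by_contra hPt
        push_neg at hPt
        have hA : (1-b)/(1-t) * P t ≤ 0 := mul_nonpos_of_nonneg_of_nonpos hμ.le hPt
        have hB : (b-t)/(1-t) * P 1 < 0 := mul_neg_of_pos_of_neg hν hP1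
        linarith
      · intro t ht
        rcases eq_or_lt_of_le ht.2 with h | h
        · rw [h]; exact hP1
        · have htb : b < t := ht.1
          have hbne : (0:ℝ) < 1 - b := by linarith
          have hμ : 0 < (1-t)/(1-b) := div_pos (by linarith) hbne
          have hν : 0 < (t-b)/(1-b) := by apply div_pos _ hbne; linarith
          have hsum : (1-t)/(1-b) + (t-b)/(1-b) = 1 := by field_simp; ring
          have := hPconv.2 ⟨hbmem.1, hbmem.2⟩ (right_mem_Icc.2 zero_le_one)
            (by intro hh; exact hbne1 hh) hμ hν hsum
          simp only [smul_eq_mul, mul_one] at this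
          have he : (1-t)/(1-b) * b + (t-b)/(1-b) = t := by field_simp; ring
          rw [he, hb] at this
          have hB : (t-b)/(1-b) * P 1 < 0 := mul_neg_of_pos_of_neg hν hP1
          simp only [mul_zero, zero_add] at this
          exact this.trans hB
  obtain ⟨b, hb0, hb1, hpos, hneg⟩ := hsign
  have hmono : StrictMonoOn Φ (Icc 0 b) := by
    apply strictMonoOn_of_deriv_pos (convex_Icc 0 b)
      (hΦcont.mono (Icc_subset_Icc (le_refl 0) hb1))
    intro t ht
    rw [interior_Icc] at ht
    rw [(hΦ' t (hmem t ⟨ht.1.le, (ht.2.le.trans hb1)⟩)).deriv]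
    exact hpos t ⟨ht.1.le, ht.2⟩
  have hanti : StrictAntiOn Φ (Icc b 1) := by
    apply strictAntiOn_of_deriv_neg (convex_Icc b 1)
      (hΦcont.mono (Icc_subset_Icc hb0.le (le_refl 1)))
    intro t ht
    rw [interior_Icc] at ht
    rw [(hΦ' t (hmem t ⟨(hb0.le.trans ht.1.le), ht.2.le⟩)).deriv]
    exact hneg t ⟨ht.1, ht.2.le⟩
  have hΦg : 0 < Φ g := by
    rcases le_or_gt g b with h | h
    · have := hmono ⟨le_refl 0, hb0.le⟩ ⟨hg0.le, h⟩ hg0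
      rw [hΦ0] at this; exact this
    · have := hanti ⟨h.le, hg1.le⟩ ⟨hb1, le_refl 1⟩ hg1
      rw [hΦ1] at this; exact this
  simp only [hΦdef] at hΦg
  linarith

private lemma star {a γ s t : ℝ} (ha0 : 0 < a) (ha2 : a < 2) (hγ0 : 0 < γ) (hγ1 : γ < 1)
    (hs : 0 < s) (hst : s ≤ t) :
    (1 - γ) * t ^ a + (γ^2 - γ) * s ^ a + γ * (t - s) ^ a < (t - γ * s) ^ a := by
  have ht : 0 < t := lt_of_lt_of_le hs hst
  rcases eq_or_lt_of_le hst with rfl | hlt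
  · -- s = t
    have h0 : (s - s : ℝ) = 0 := by ring
    rw [h0, Real.zero_rpow ha0.ne']
    have he : s - γ * s = (1 - γ) * s := by ring
    rw [he, Real.mul_rpow (by linarith) hs.le]
    have h1 : (1 - γ) ^ (2:ℝ) < (1 - γ) ^ a :=
      Real.rpow_lt_rpow_of_exponent_gt (by linarith) (by linarith) ha2
    rw [show ((2:ℝ):ℝ) = ((2:ℕ):ℝ) by norm_num, Real.rpow_natCast] at h1
    have h2 : 0 < s ^ a := Real.rpow_pos_of_pos hs a
    nlinarith [h1, h2]
  · -- s < t
    set x := s / t with hxdef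
    have hx0 : 0 < x := div_pos hs ht
    have hx1 : x < 1 := (div_lt_one ht).2 hlt
    have key := phi_pos ha0 ha2 hx0 hx1 hγ0 hγ1
    have htne : t ≠ 0 := ht.ne'
    have htpow : 0 < t ^ a := Real.rpow_pos_of_pos ht a
    have e1 : x ^ a * t ^ a = s ^ a := by
      rw [← Real.mul_rpow hx0.le ht.le]
      congr 1
      rw [hxdef]
      field_simp
    have e2 : (1 - x) ^ a * t ^ a = (t - s) ^ a := by
      rw [← Real.mul_rpow (by linarith) ht.le]
      congr 1
      rw [hxdef]
      field_simp
    have e3 : (1 - γ * x) ^ a * t ^ a = (t - γ * s) ^ a := by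
      rw [← Real.mul_rpow (by nlinarith) ht.le]
      congr 1
      rw [hxdef]
      field_simp
    have h := mul_lt_mul_of_pos_right key htpow
    rw [e3] at h
    have eL : (1 - γ) * t ^ a + (γ^2 - γ) * s ^ a + γ * (t - s) ^ a
        = ((1 - γ) + (γ ^ 2 - γ) * x ^ a + γ * (1 - x) ^ a) * t ^ a := by
      rw [← e1, ← e2]; ring
    rw [eL]
    exact h

private lemma one_var {H c u : ℝ} (hH0 : 0 < H) (hH1 : H < 1) (hc : 0 < c) (hu : 0 ≤ u)
    (hne : u ≠ H / (c * (1 - H))) :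
    u ^ H * (1 + c * (H / (c * (1 - H)))) < (H / (c * (1 - H))) ^ H * (1 + c * u) := by
  have h1H : 0 < 1 - H := by linarith
  set t0 := H / (c * (1 - H)) with ht0def
  have ht0 : 0 < t0 := div_pos hH0 (by positivity)
  have hct0 : c * t0 = H / (1 - H) := by
    rw [ht0def]; field_simp
  have hden : 1 + c * t0 = 1 / (1 - H) := by
    rw [hct0]; field_simp; ring
  rcases eq_or_lt_of_le hu with rfl | hu0
  · rw [Real.zero_rpow hH0.ne', zero_mul]
    have := Real.rpow_pos_of_pos ht0 H
    nlinarith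
  · set z := u / t0 with hzdef
    have hz0 : 0 < z := div_pos hu0 ht0
    have hz1 : z ≠ 1 := by
      intro h
      apply hne
      have : u = t0 := by
        rw [hzdef, div_eq_one_iff_eq ht0.ne'] at h
        exact h
      rw [this]
    have hueq : u = z * t0 := by rw [hzdef]; field_simp
    have bern : z ^ H < 1 + H * (z - 1) := by
      have := rpow_one_add_lt_one_add_mul_self (s := z - 1) (by linarith)
        (by intro h; apply hz1; linarith) hH0 hH1
      rwa [show (1:ℝ) + (z - 1) = z by ring] at this
    have key : z ^ H * (1 + c * t0) < 1 + c * (z * t0) := by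
      rw [hden]
      have e : c * (z * t0) = H / (1 - H) * z := by
        rw [show c * (z * t0) = (c * t0) * z by ring, hct0]
      rw [e, mul_one_div, div_lt_iff₀ h1H]
      have e2 : (1 + H / (1 - H) * z) * (1 - H) = 1 - H + H * z := by
        field_simp
      rw [e2]
      linarith
    have := mul_lt_mul_of_pos_left key (Real.rpow_pos_of_pos ht0 H)
    calc u ^ H * (1 + c * t0) = t0 ^ H * (z ^ H * (1 + c * t0)) := by
          rw [hueq, Real.mul_rpow hz0.le ht0.le]; ring
      _ < t0 ^ H * (1 + c * (z * t0)) := this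
      _ = t0 ^ H * (1 + c * u) := by rw [← hueq]

private lemma VY2_zero {H γ c u : ℝ} (hH0 : 0 < H) :
    VY2 H γ c 0 u = u ^ (2*H) / (1 + c * u) ^ 2 := by
  unfold VY2
  rw [Real.zero_rpow (by positivity : (2:ℝ)*H ≠ 0)]
  ring_nf

private lemma VY_zero {H γ c u : ℝ} (hH0 : 0 < H) (hu : 0 ≤ u) (hd : 0 < 1 + c * u) :
    VY H γ c 0 u = u ^ H / (1 + c * u) := by
  unfold VY
  rw [VY2_zero hH0]
  have e : u ^ ((2:ℝ)*H) = (u ^ H) ^ 2 := by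
    rw [show (2:ℝ)*H = H*2 by ring, Real.rpow_mul hu, Real.rpow_two]
  rw [e, ← div_pow, Real.sqrt_sq (by positivity)]

/-- Lemma 3.1: `V_Y` attains its unique global maximum over `{0 ≤ s ≤ t < ∞}`
at `(0, H/(c(1−H)))`, with maximal value `H^H (1−H)^{1−H} / c^H`. -/
theorem VY_unique_max (H γ c : ℝ)
    (hH : H ∈ Set.Ioo (0:ℝ) 1) (hγ : γ ∈ Set.Ioo (0:ℝ) 1) (hc : 0 < c) :
    (∀ s t : ℝ, 0 ≤ s → s ≤ t → (s, t) ≠ (0, H / (c * (1 - H))) →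
      VY H γ c s t < VY H γ c 0 (H / (c * (1 - H)))) ∧
    VY H γ c 0 (H / (c * (1 - H))) = H ^ H * (1 - H) ^ (1 - H) / c ^ H := by
  obtain ⟨hH0, hH1⟩ := hH
  obtain ⟨hγ0, hγ1⟩ := hγ
  have h1H : (0:ℝ) < 1 - H := by linarith
  set t0 := H / (c * (1 - H)) with ht0def
  have ht0 : 0 < t0 := div_pos hH0 (by positivity)
  have hdt0 : 0 < 1 + c * t0 := by nlinarith [mul_pos hc ht0]
  have hVY0 : VY H γ c 0 t0 = t0 ^ H / (1 + c * t0) := VY_zero hH0 ht0.le hdt0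
  constructor
  · intro s t hs hst hne
    rcases eq_or_lt_of_le hs with hseq | hs0
    · -- s = 0
      subst hseq
      have htne : t ≠ t0 := by intro h; apply hne; rw [h]
      have hdt : 0 < 1 + c * t := by nlinarith [mul_nonneg hc.le hst]
      rw [VY_zero hH0 hst hdt, hVY0, div_lt_div_iff₀ hdt hdt0]
      exact one_var hH0 hH1 hc hst htne
    · -- 0 < s
      have ht : 0 < t := lt_of_lt_of_le hs0 hst
      set u := t - γ * s with hudef
      have hu0 : 0 < u := by rw [hudef]; nlinarith
      have hdu : 0 < 1 + c * u := by nlinarith [mul_pos hc hu0]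
      have hstar := star (by linarith : (0:ℝ) < 2*H) (by linarith : 2*H < 2) hγ0 hγ1 hs0 hst
      have hsa : s ^ (2*H) ≤ t ^ (2*H) := Real.rpow_le_rpow hs0.le hst (by linarith)
      have hsnn : 0 ≤ s ^ (2*H) := Real.rpow_nonneg hs0.le _
      have htsnn : 0 ≤ (t - s) ^ (2*H) := Real.rpow_nonneg (by linarith) _
      have hN : 0 ≤ (1 - γ) * t ^ (2*H) + (γ^2 - γ) * s ^ (2*H) + γ * (t - s) ^ (2*H) := by
        nlinarith [mul_nonneg (by linarith : (0:ℝ) ≤ 1 - γ) (sub_nonneg.2 hsa),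
          mul_nonneg hγ0.le htsnn,
          mul_nonneg (mul_nonneg (by linarith : (0:ℝ) ≤ 1-γ) (by linarith : (0:ℝ) ≤ 1-γ)) hsnn]
      have h0le : 0 ≤ VY2 H γ c s t := by
        unfold VY2; exact div_nonneg hN (sq_nonneg _)
      have hVY2 : VY2 H γ c s t < VY2 H γ c 0 u := by
        rw [VY2_zero hH0]
        unfold VY2
        have hD : 1 + c * t - c * γ * s = 1 + c * u := by rw [hudef]; ring
        rw [hD, div_lt_div_iff₀ (by positivity) (by positivity)]
        apply mul_lt_mul_of_pos_right _ (by positivity)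
        rw [hudef]
        exact hstar
      have hsqrt : VY H γ c s t < VY H γ c 0 u := by
        unfold VY
        exact Real.sqrt_lt_sqrt h0le hVY2
      have hle : VY H γ c 0 u ≤ VY H γ c 0 t0 := by
        rw [VY_zero hH0 hu0.le hdu, hVY0]
        rcases eq_or_ne u t0 with h | h
        · rw [h]
        · rw [div_le_div_iff₀ hdu hdt0]
          exact (one_var hH0 hH1 hc hu0.le h).le
      exact lt_of_lt_of_le hsqrt hle
  · rw [hVY0]
    have hct0 : 1 + c * t0 = 1 / (1 - H) := by
      rw [ht0def]; field_simp; ring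
    have ht0H : t0 ^ H = H ^ H / (c ^ H * (1 - H) ^ H) := by
      rw [ht0def, Real.div_rpow hH0.le (by positivity : (0:ℝ) ≤ c*(1-H)),
        Real.mul_rpow hc.le h1H.le]
    have hE : (1 - H) ^ (1 - H) = (1 - H) / (1 - H) ^ H := by
      rw [Real.rpow_sub h1H 1 H, Real.rpow_one]
    rw [hct0, ht0H, hE]
    have hcH : (0:ℝ) < c ^ H := Real.rpow_pos_of_pos hc H
    have h1HH : (0:ℝ) < (1 - H) ^ H := Real.rpow_pos_of_pos h1H H
    field_simp
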